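/- Let G be a GKM moment graph and P ∈ C^{ref} a sheaf such that (1) each stalk P^x is a projective (graded free) S-module and (2) for every edge E: y →α x the map ρ_{y,E} induces an isomorphism P^y/αP^y ≅ P^E. Then P is a projective object of the exact category C^{ref}. -/

import Mathlib

open scoped TensorProduct

/-- `(S, ι)` is a symmetric algebra of the `k`-vector space `V`. -/
structure IsSymmAlg (k V S : Type) [Field k] [AddCommGroup V] [Module k V]
    [CommRing S] [Algebra k S] (ι : V →ₗ[k] S) : Prop where
  univ : ∀ (A : Type) [CommRing A] [Algebra k A] (φ : V →ₗ[k] A),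
    ∃! ψ : S →ₐ[k] A, ∀ v, ψ (ι v) = φ v

/-- A moment graph over the `k`-vector space `V`: a graph with a partial order on
vertices such that linked vertices are comparable (each edge is recorded with
`src ≤ tgt`), and a labelling of edges by (generators of) one-dimensional
subspaces of `V`. -/
structure MomentGraph (k V : Type) [Field k] [AddCommGroup V] [Module k V] where
  Vertex : Type
  Edge : Type
  src : Edge → Vertex
  tgt : Edge → Vertex
  le : Vertex → Vertex → Prop
  le_refl : ∀ x, le x x
  le_trans : ∀ x y z, le x y → le y z → le x z
  le_antisymm : ∀ x y, le x y → le y x → x = y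
  src_le_tgt : ∀ e, le (src e) (tgt e)
  src_ne_tgt : ∀ e, src e ≠ tgt e
  label : Edge → V
  label_ne : ∀ e, label e ≠ 0

variable {k V : Type} [Field k] [AddCommGroup V] [Module k V]

/-- The space of sections over a subgraph `I` of the structure sheaf of `G`, with
entries in a commutative ring `A` receiving the labels via `σ : V → A`: tuples
`(z_x)_{x ∈ I}` (encoded as functions vanishing off `I`) with
`z_x ≡ z_y mod σ(α)` for each edge `x —α— y` of `I`. -/
def secAlg (G : MomentGraph k V) (A : Type) [CommRing A] (σ : V → A)
    (I : Set G.Vertex) : Submodule A (G.Vertex → A) where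
  carrier := {z | (∀ x ∉ I, z x = 0) ∧ ∀ e, G.src e ∈ I → G.tgt e ∈ I →
      z (G.src e) - z (G.tgt e) ∈ Ideal.span {σ (G.label e)}}
  add_mem' := by
    intro a b ha hb
    refine ⟨fun x hx => ?_, fun e hs ht => ?_⟩
    · simp [ha.1 x hx, hb.1 x hx]
    · have h : (a + b) (G.src e) - (a + b) (G.tgt e)
          = (a (G.src e) - a (G.tgt e)) + (b (G.src e) - b (G.tgt e)) := by
        simp only [Pi.add_apply]; ring
      rw [h]
      exact (Ideal.span {σ (G.label e)}).add_mem (ha.2 e hs ht) (hb.2 e hs ht)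
  zero_mem' := by
    refine ⟨fun x _ => rfl, fun e _ _ => ?_⟩
    simp
  smul_mem' := by
    intro c a ha
    refine ⟨fun x hx => by simp [ha.1 x hx], fun e hs ht => ?_⟩
    have h : (c • a) (G.src e) - (c • a) (G.tgt e)
        = c * (a (G.src e) - a (G.tgt e)) := by
      simp only [Pi.smul_apply, smul_eq_mul]; ring
    rw [h]
    exact Ideal.mul_mem_left _ c (ha.2 e hs ht)

/-- The structure algebra `Z(G)` of `G` with coefficients in `S` (via `ι`). -/
def structAlg (G : MomentGraph k V) (S : Type) [CommRing S] (σ : V → S) :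
    Submodule S (G.Vertex → S) := secAlg G S σ Set.univ

/-- Restriction of tuples to a subgraph `I` (extension by zero off `I`). -/
noncomputable def restrictTo {A : Type} [CommRing A] {X : Type} (I : Set X) :
    (X → A) →ₗ[A] (X → A) where
  toFun z := I.indicator z
  map_add' a b := by
    funext x
    classical
    by_cases hx : x ∈ I <;> simp [Set.indicator, hx]
  map_smul' c a := by
    funext x
    classical
    by_cases hx : x ∈ I <;> simp [Set.indicator, hx]

/-- `Z(G)^I`: the image of the restriction map `Z(G) → Z(I)`. -/
noncomputable def structAlgRes (G : MomentGraph k V) (S : Type) [CommRing S]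
    (σ : V → S) (I : Set G.Vertex) : Submodule S (G.Vertex → S) :=
  Submodule.map (restrictTo I) (structAlg G S σ)

/-- The structure algebra `Z = Z(G)` as a subalgebra of `∏_{x} S` (pointwise
operations). -/
def structSubalg (G : MomentGraph k V) (S : Type) [CommRing S] (σ : V → S) :
    Subalgebra S (G.Vertex → S) where
  carrier := {z | ∀ e, z (G.src e) - z (G.tgt e) ∈ Ideal.span {σ (G.label e)}}
  add_mem' := by
    intro a b ha hb e
    have h : (a + b) (G.src e) - (a + b) (G.tgt e)
        = (a (G.src e) - a (G.tgt e)) + (b (G.src e) - b (G.tgt e)) := by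
      simp only [Pi.add_apply]; ring
    rw [h]; exact (Ideal.span _).add_mem (ha e) (hb e)
  mul_mem' := by
    intro a b ha hb e
    have h : (a * b) (G.src e) - (a * b) (G.tgt e)
        = a (G.src e) * (b (G.src e) - b (G.tgt e))
          + b (G.tgt e) * (a (G.src e) - a (G.tgt e)) := by
      simp only [Pi.mul_apply]; ring
    rw [h]
    exact (Ideal.span _).add_mem (Ideal.mul_mem_left _ _ (hb e))
      (Ideal.mul_mem_left _ _ (ha e))
  algebraMap_mem' := by
    intro c e
    simp
  one_mem' := by
    intro e; simp
  zero_mem' := by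
    intro e; simp

/-- Quasi-finiteness of a moment graph `G`: for every `γ ∈ V` (with `S·γ`
prime) and every finite subgraph `I`, the natural map
`Z(G)^I ⊗_S S_γ → Z_γ(I)` is a bijection. -/
def QuasiFinite {S : Type} [CommRing S] [Algebra k S] (ι : V →ₗ[k] S)
    (G : MomentGraph k V) : Prop :=
  ∀ (γ : V), γ ≠ 0 → ∀ (hp : (Ideal.span {ι γ}).IsPrime)
    (I : Set G.Vertex), I.Finite →
    letI := hp
    ∃ f : (structAlgRes G S ι I) ⊗[S] (Localization (Ideal.span {ι γ}).primeCompl)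
        →ₗ[S] (G.Vertex → Localization (Ideal.span {ι γ}).primeCompl),
      (∀ (m : structAlgRes G S ι I)
          (s : Localization (Ideal.span {ι γ}).primeCompl),
        f (m ⊗ₜ s) = fun x => s * algebraMap S _ (m.val x))
      ∧ Function.Injective f
      ∧ LinearMap.range f = Submodule.restrictScalars S
          (secAlg G (Localization (Ideal.span {ι γ}).primeCompl)
            (fun v => algebraMap S _ (ι v)) I)

section CoordFramework

open scoped Classical

/-- Projection of a tuple onto the coordinates in `I` (zero off `I`). -/
noncomputable def projTo {k V : Type} [Field k] [AddCommGroup V] [Module k V]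
    {S : Type} [CommRing S] (G : MomentGraph k V) (W : G.Vertex → Type)
    [∀ x, AddCommGroup (W x)] [∀ x, Module S (W x)] (I : Set G.Vertex) :
    (∀ x, W x) →ₗ[S] (∀ x, W x) where
  toFun m x := if x ∈ I then m x else 0
  map_add' a b := by
    funext x
    by_cases hx : x ∈ I <;> simp [hx]
  map_smul' c a := by
    funext x
    by_cases hx : x ∈ I <;> simp [hx]

/-- `M` (a submodule of `∏_x M_Q^x`) is an object of `Z-mod^f`, coordinatized
via its canonical decomposition: it is stable under the coordinatewise action
of the structure algebra `Z`, finitely generated over `S`, and has finite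
support. -/
def IsCoordModF {k V : Type} [Field k] [AddCommGroup V] [Module k V]
    {S : Type} [CommRing S] [Algebra k S] (G : MomentGraph k V)
    (Q : Type) [CommRing Q] [Algebra S Q] (W : G.Vertex → Type)
    [∀ x, AddCommGroup (W x)] [∀ x, Module Q (W x)] [∀ x, Module S (W x)]
    (ι : V →ₗ[k] S) (M : Submodule S (∀ x, W x)) : Prop :=
  (∀ z : G.Vertex → S, z ∈ structSubalg G S ι → ∀ m ∈ M,
      (fun x => algebraMap S Q (z x) • m x) ∈ M)
  ∧ Module.Finite S M
  ∧ {x : G.Vertex | ∃ m ∈ M, m x ≠ 0}.Finite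

/-- `M^J`: the projection of `M` onto the coordinates in `J`. -/
noncomputable def projMod {k V : Type} [Field k] [AddCommGroup V] [Module k V]
    {S : Type} [CommRing S] (G : MomentGraph k V) (W : G.Vertex → Type)
    [∀ x, AddCommGroup (W x)] [∀ x, Module S (W x)]
    (M : Submodule S (∀ x, W x)) (J : Set G.Vertex) :
    Submodule S (∀ x, W x) :=
  Submodule.map (projTo G W J) M

/-- The stalk `M^x`. -/
noncomputable def stalkMod {k V : Type} [Field k] [AddCommGroup V] [Module k V]
    {S : Type} [CommRing S] (G : MomentGraph k V) (W : G.Vertex → Type)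
    [∀ x, AddCommGroup (W x)] [∀ x, Module S (W x)]
    (M : Submodule S (∀ x, W x)) (x : G.Vertex) :
    Submodule S (∀ y, W y) :=
  projMod G W M {x}

/-- `M(E) = Z(E)·M^{x,y}` for an edge `E : x —α— y`. -/
noncomputable def edgeMod {k V : Type} [Field k] [AddCommGroup V] [Module k V]
    {S : Type} [CommRing S] [Algebra k S] (G : MomentGraph k V)
    (Q : Type) [CommRing Q] [Algebra S Q] (W : G.Vertex → Type)
    [∀ x, AddCommGroup (W x)] [∀ x, Module Q (W x)] [∀ x, Module S (W x)]
    (ι : V →ₗ[k] S) (M : Submodule S (∀ x, W x)) (e : G.Edge) :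
    Submodule S (∀ x, W x) :=
  Submodule.span S
    {p | ∃ z : S × S, z.1 - z.2 ∈ Ideal.span {ι (G.label e)} ∧
      ∃ m ∈ projMod G W M {G.src e, G.tgt e},
        p = fun x => algebraMap S Q (if x = G.src e then z.1 else z.2) • m x}

/-- Sign twist at the vertex `y` (used to form pushouts). -/
noncomputable def twistAt {k V : Type} [Field k] [AddCommGroup V] [Module k V]
    {S : Type} [CommRing S] (G : MomentGraph k V) (W : G.Vertex → Type)
    [∀ x, AddCommGroup (W x)] [∀ x, Module S (W x)] (y : G.Vertex) :
    (∀ x, W x) →ₗ[S] (∀ x, W x) where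
  toFun m x := if x = y then -m x else m x
  map_add' a b := by
    funext x
    by_cases hx : x = y <;> simp [hx] <;> abel
  map_smul' c a := by
    funext x
    by_cases hx : x = y <;> simp [hx]

/-- `M^x ⊕ M^y` for an edge `E : x — y` (internal sum of the stalks). -/
noncomputable def pairMod {k V : Type} [Field k] [AddCommGroup V] [Module k V]
    {S : Type} [CommRing S] (G : MomentGraph k V) (W : G.Vertex → Type)
    [∀ x, AddCommGroup (W x)] [∀ x, Module S (W x)]
    (M : Submodule S (∀ x, W x)) (e : G.Edge) :
    Submodule S (∀ x, W x) :=
  stalkMod G W M (G.src e) ⊔ stalkMod G W M (G.tgt e)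

/-- The submodule of `M^x ⊕ M^y` one divides by to obtain the pushout
`L(M)^E` of `M^x ← M(E) → M^y`. -/
noncomputable def pushKer {k V : Type} [Field k] [AddCommGroup V] [Module k V]
    {S : Type} [CommRing S] [Algebra k S] (G : MomentGraph k V)
    (Q : Type) [CommRing Q] [Algebra S Q] (W : G.Vertex → Type)
    [∀ x, AddCommGroup (W x)] [∀ x, Module Q (W x)] [∀ x, Module S (W x)]
    (ι : V →ₗ[k] S) (M : Submodule S (∀ x, W x)) (e : G.Edge) :
    Submodule S (pairMod G W M e) :=
  Submodule.comap (pairMod G W M e).subtype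
    (Submodule.map (twistAt G W (G.tgt e)) (edgeMod G Q W ι M e))

/-- The sections `Γ(L(M))` of the localized sheaf, described by local relations:
tuples `(m_x)` with `m_x ∈ M^x` for all `x` and `(m_x, m_y) ∈ M(E)` for all
edges `E : x — y`. -/
noncomputable def locSections {k V : Type} [Field k] [AddCommGroup V] [Module k V]
    {S : Type} [CommRing S] [Algebra k S] (G : MomentGraph k V)
    (Q : Type) [CommRing Q] [Algebra S Q] (W : G.Vertex → Type)
    [∀ x, AddCommGroup (W x)] [∀ x, Module Q (W x)] [∀ x, Module S (W x)]
    (ι : V →ₗ[k] S) (M : Submodule S (∀ x, W x)) :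
    Set (∀ x, W x) :=
  {m | (∀ x, projTo (S := S) G W {x} m ∈ stalkMod G W M x)
    ∧ ∀ e : G.Edge,
        projTo (S := S) G W {G.src e, G.tgt e} m ∈ edgeMod G Q W ι M e}

/-- `M` is determined by local relations, i.e. the unit `M → Γ(L(M))` is an
isomorphism. -/
def DetByLocal {k V : Type} [Field k] [AddCommGroup V] [Module k V]
    {S : Type} [CommRing S] [Algebra k S] (G : MomentGraph k V)
    (Q : Type) [CommRing Q] [Algebra S Q] (W : G.Vertex → Type)
    [∀ x, AddCommGroup (W x)] [∀ x, Module Q (W x)] [∀ x, Module S (W x)]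
    (ι : V →ₗ[k] S) (M : Submodule S (∀ x, W x)) : Prop :=
  (M : Set (∀ x, W x)) = locSections G Q W ι M

/-- Open (downwardly closed) subgraphs for the Alexandrov topology. -/
def IsOpenSub {k V : Type} [Field k] [AddCommGroup V] [Module k V]
    (G : MomentGraph k V) (I : Set G.Vertex) : Prop :=
  ∀ x y, G.le x y → y ∈ I → x ∈ I

/-- `M` is flabby: `M^I` is determined by local relations for every open `I`. -/
def Flabby {k V : Type} [Field k] [AddCommGroup V] [Module k V]
    {S : Type} [CommRing S] [Algebra k S] (G : MomentGraph k V)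
    (Q : Type) [CommRing Q] [Algebra S Q] (W : G.Vertex → Type)
    [∀ x, AddCommGroup (W x)] [∀ x, Module Q (W x)] [∀ x, Module S (W x)]
    (ι : V →ₗ[k] S) (M : Submodule S (∀ x, W x)) : Prop :=
  ∀ I : Set G.Vertex, IsOpenSub G I → DetByLocal G Q W ι (projMod G W M I)

/-- Tuples supported at the single vertex `x`. -/
def vertexOnly {k V : Type} [Field k] [AddCommGroup V] [Module k V]
    {S : Type} [CommRing S] (G : MomentGraph k V) (W : G.Vertex → Type)
    [∀ x, AddCommGroup (W x)] [∀ x, Module S (W x)] (x : G.Vertex) :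
    Submodule S (∀ y, W y) where
  carrier := {m | ∀ y, y ≠ x → m y = 0}
  add_mem' := by
    intro a b ha hb y hy
    simp [ha y hy, hb y hy]
  zero_mem' := fun y _ => rfl
  smul_mem' := by
    intro c a ha y hy
    simp [ha y hy]

/-- `M^{[x]} = ker(M^{≤x} → M^{<x})`: elements of `M^{≤x}` supported on `{x}`. -/
noncomputable def grKernel {k V : Type} [Field k] [AddCommGroup V] [Module k V]
    {S : Type} [CommRing S] (G : MomentGraph k V) (W : G.Vertex → Type)
    [∀ x, AddCommGroup (W x)] [∀ x, Module S (W x)]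
    (M : Submodule S (∀ x, W x)) (x : G.Vertex) :
    Submodule S (∀ y, W y) :=
  projMod G W M {y | G.le y x} ⊓ vertexOnly G W x

end CoordFramework


/-- A sheaf on the moment graph `G` (labels mapped into `S` via `σ`):
`S`-modules on vertices and edges, with `σ(l(E))·M^E = 0`, and restriction
maps from the stalks at the endpoints of each edge. -/
structure GSheaf {k V : Type} [Field k] [AddCommGroup V] [Module k V]
    {S : Type} [CommRing S] (G : MomentGraph k V) (σ : V → S) where
  Mv : G.Vertex → ModuleCat S
  Me : G.Edge → ModuleCat S
  ρs : ∀ e, Mv (G.src e) ⟶ Me e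
  ρt : ∀ e, Mv (G.tgt e) ⟶ Me e
  killed : ∀ e (u : Me e), σ (G.label e) • u = 0

/-- The space of sections of a sheaf over a subgraph `I` (tuples encoded as
functions vanishing off `I`). -/
def sheafSec {k V : Type} [Field k] [AddCommGroup V] [Module k V]
    {S : Type} [CommRing S] {G : MomentGraph k V} {σ : V → S}
    (F : GSheaf G σ) (I : Set G.Vertex) : Submodule S (∀ x, F.Mv x) where
  carrier := {m | (∀ x ∉ I, m x = 0) ∧ ∀ e, G.src e ∈ I → G.tgt e ∈ I →
      F.ρs e (m (G.src e)) = F.ρt e (m (G.tgt e))}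
  add_mem' := by
    intro a b ha hb
    refine ⟨fun x hx => ?_, fun e hs ht => ?_⟩
    · show a x + b x = 0
      rw [ha.1 x hx, hb.1 x hx, add_zero]
    · show F.ρs e (a (G.src e) + b (G.src e)) = F.ρt e (a (G.tgt e) + b (G.tgt e))
      rw [map_add, map_add, ha.2 e hs ht, hb.2 e hs ht]
  zero_mem' := ⟨fun x _ => rfl, fun e _ _ => by
    show F.ρs e 0 = F.ρt e 0
    rw [map_zero, map_zero]⟩
  smul_mem' := by
    intro c a ha
    refine ⟨fun x hx => ?_, fun e hs ht => ?_⟩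
    · show c • a x = 0
      rw [ha.1 x hx, smul_zero]
    · show F.ρs e (c • a (G.src e)) = F.ρt e (c • a (G.tgt e))
      rw [map_smul, map_smul, ha.2 e hs ht]

/-- `F` belongs to `SH(G)`: finite support, with finitely generated
torsion-free stalks. -/
def IsSHObj {k V : Type} [Field k] [AddCommGroup V] [Module k V]
    {S : Type} [CommRing S] {G : MomentGraph k V} {σ : V → S}
    (F : GSheaf G σ) : Prop :=
  {x : G.Vertex | ∃ m : F.Mv x, m ≠ 0}.Finite
  ∧ (∀ x, Module.Finite S (F.Mv x))
  ∧ ∀ (x : G.Vertex) (s : S) (m : F.Mv x), s • m = 0 → s = 0 ∨ m = 0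

/-- A morphism of sheaves on `G`. -/
structure GSheafHom {k V : Type} [Field k] [AddCommGroup V] [Module k V]
    {S : Type} [CommRing S] {G : MomentGraph k V} {σ : V → S}
    (F F' : GSheaf G σ) where
  fv : ∀ x, F.Mv x ⟶ F'.Mv x
  fe : ∀ e, F.Me e ⟶ F'.Me e
  comm_s : ∀ e (m : F.Mv (G.src e)),
    fe e (F.ρs e m) = F'.ρs e (fv (G.src e) m)
  comm_t : ∀ e (m : F.Mv (G.tgt e)),
    fe e (F.ρt e m) = F'.ρt e (fv (G.tgt e) m)

/-- `F` is generated by global sections (the counit `L(Γ(F)) → F` is an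
isomorphism): every stalk element is the component of a global section, the
edge modules are generated by the images of the stalks, and every local
relation comes from a global section. -/
def IsGenByGlobal {k V : Type} [Field k] [AddCommGroup V] [Module k V]
    {S : Type} [CommRing S] {G : MomentGraph k V} {σ : V → S}
    (F : GSheaf G σ) : Prop :=
  (∀ (x : G.Vertex) (m : F.Mv x), ∃ s ∈ sheafSec F Set.univ, s x = m)
  ∧ (∀ (e : G.Edge) (u : F.Me e), ∃ a b, F.ρs e a + F.ρt e b = u)
  ∧ ∀ (e : G.Edge) (a : F.Mv (G.src e)) (b : F.Mv (G.tgt e)),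
      F.ρs e a = F.ρt e b →
      ∃ s ∈ sheafSec F Set.univ, s (G.src e) = a ∧ s (G.tgt e) = b

/-- `F` is flabby for the Alexandrov topology: sections over open subgraphs
extend to global sections. -/
def IsFlabbySheaf {k V : Type} [Field k] [AddCommGroup V] [Module k V]
    {S : Type} [CommRing S] {G : MomentGraph k V} {σ : V → S}
    (F : GSheaf G σ) : Prop :=
  ∀ I : Set G.Vertex, IsOpenSub G I →
    ∀ s ∈ sheafSec F I, ∃ t ∈ sheafSec F Set.univ, ∀ x ∈ I, t x = s x

/-- `F` has reflexive spaces of sections over all open subgraphs. -/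
def IsRefSheaf {k V : Type} [Field k] [AddCommGroup V] [Module k V]
    {S : Type} [CommRing S] {G : MomentGraph k V} {σ : V → S}
    (F : GSheaf G σ) : Prop :=
  ∀ I : Set G.Vertex, IsOpenSub G I →
    Function.Bijective (Module.Dual.eval S (sheafSec F I))

/-- Objects of the exact category `C^{ref}`: sheaves in `SH(G)` generated by
global sections, flabby, with reflexive sections. -/
def IsCref {k V : Type} [Field k] [AddCommGroup V] [Module k V]
    {S : Type} [CommRing S] {G : MomentGraph k V} {σ : V → S}
    (F : GSheaf G σ) : Prop :=
  IsSHObj F ∧ IsGenByGlobal F ∧ IsFlabbySheaf F ∧ IsRefSheaf F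

/-- The sequence `A → B → C` of sheaves is short exact: the induced sequence of
sections over every open subgraph is short exact. -/
def SheafSES {k V : Type} [Field k] [AddCommGroup V] [Module k V]
    {S : Type} [CommRing S] {G : MomentGraph k V} {σ : V → S}
    {A B C : GSheaf G σ} (f : GSheafHom A B) (g : GSheafHom B C) : Prop :=
  ∀ I : Set G.Vertex, IsOpenSub G I →
    (∀ s ∈ sheafSec A I, (fun x => f.fv x (s x)) = (0 : ∀ x, B.Mv x) → s = 0)
    ∧ (∀ s ∈ sheafSec A I,
        (fun x => g.fv x (f.fv x (s x))) = (0 : ∀ x, C.Mv x))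
    ∧ (∀ t ∈ sheafSec B I, (fun x => g.fv x (t x)) = (0 : ∀ x, C.Mv x) →
        ∃ s ∈ sheafSec A I, (fun x => f.fv x (s x)) = t)
    ∧ (∀ u ∈ sheafSec C I,
        ∃ t ∈ sheafSec B I, (fun x => g.fv x (t x)) = u)

/-- `P` is a projective object of the exact category `C^{ref}`: morphisms to
the target of an admissible epimorphism in `C^{ref}` lift. -/
def IsProjCref {k V : Type} [Field k] [AddCommGroup V] [Module k V]
    {S : Type} [CommRing S] {G : MomentGraph k V} {σ : V → S}
    (P : GSheaf G σ) : Prop :=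
  ∀ (B C : GSheaf G σ), IsCref B → IsCref C → ∀ g : GSheafHom B C,
    (∃ A : GSheaf G σ, IsCref A ∧ ∃ f : GSheafHom A B, SheafSES f g) →
    ∀ h : GSheafHom P C, ∃ l : GSheafHom P B,
      (∀ x m, g.fv x (l.fv x m) = h.fv x m)
      ∧ ∀ e u, g.fe e (l.fe e u) = h.fe e u

/-- A morphism of sheaves is an isomorphism. -/
def IsIsoHom {k V : Type} [Field k] [AddCommGroup V] [Module k V]
    {S : Type} [CommRing S] {G : MomentGraph k V} {σ : V → S}
    {A B : GSheaf G σ} (f : GSheafHom A B) : Prop :=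
  (∀ x, Function.Bijective (f.fv x)) ∧ ∀ e, Function.Bijective (f.fe e)

/-- A sheaf is indecomposable: it is nonzero and every idempotent endomorphism
is the identity or zero. -/
def IsIndecSheaf {k V : Type} [Field k] [AddCommGroup V] [Module k V]
    {S : Type} [CommRing S] {G : MomentGraph k V} {σ : V → S}
    (P : GSheaf G σ) : Prop :=
  (∃ (x : G.Vertex) (m : P.Mv x), m ≠ 0)
  ∧ ∀ f : GSheafHom P P, (∀ x m, f.fv x (f.fv x m) = f.fv x m) →
      (∀ e u, f.fe e (f.fe e u) = f.fe e u) →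
      ((∀ x m, f.fv x m = m) ∧ ∀ e u, f.fe e u = u)
      ∨ ((∀ x (m : P.Mv x), f.fv x m = 0) ∧ ∀ e (u : P.Me e), f.fe e u = 0)
/-- A vertex is incident to an edge. -/
def Incident {k V : Type} [Field k] [AddCommGroup V] [Module k V]
    (G : MomentGraph k V) (x : G.Vertex) (e : G.Edge) : Prop :=
  G.src e = x ∨ G.tgt e = x

/-- `G` is a GKM-graph: it is quasi-finite and at every vertex the labels of
the incident edges are pairwise linearly independent. -/
def IsGKM {k V S : Type} [Field k] [AddCommGroup V] [Module k V]
    [CommRing S] [Algebra k S] (ι : V →ₗ[k] S) (G : MomentGraph k V) : Prop :=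
  QuasiFinite ι G ∧
    ∀ (x : G.Vertex) (e e' : G.Edge), Incident G x e → Incident G x e' →
      e ≠ e' → ∀ c : k, G.label e' ≠ c • G.label e


section LocalCriterionAux

variable {k V : Type} [Field k] [AddCommGroup V] [Module k V]
    {S : Type} [CommRing S] {G : MomentGraph k V} {σ : V → S}

/-- Cast between stalks along an equality of vertices. -/
def mcastV (F : GSheaf G σ) {v w : G.Vertex} (hvw : v = w) :
    F.Mv v ≃ₗ[S] F.Mv w := by subst hvw; exact LinearEquiv.refl _ _

@[simp] lemma mcastV_self (F : GSheaf G σ) {v : G.Vertex} (hvv : v = v) (m : F.Mv v) :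
    mcastV (σ := σ) F hvv m = m := rfl

/-- Construction of the induced map on edge modules from a map on source
stalks, through the surjection `ρ_s`. -/
lemma exists_psi {P B : GSheaf G σ} (e : G.Edge)
    (hsurj : Function.Surjective (P.ρs e))
    (hker : ∀ m : P.Mv (G.src e), P.ρs e m = 0 ↔ ∃ n, m = σ (G.label e) • n)
    (q : P.Mv (G.src e) →ₗ[S] B.Mv (G.src e)) :
    ∃ ψ : P.Me e →ₗ[S] B.Me e, ∀ m, ψ (P.ρs e m) = B.ρs e (q m) := by
  have key : ∀ m m' : P.Mv (G.src e), P.ρs e m = P.ρs e m' →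
      B.ρs e (q m) = B.ρs e (q m') := by
    intro m m' hmm
    have h0 : P.ρs e (m - m') = 0 := by rw [map_sub, hmm, sub_self]
    obtain ⟨n, hn⟩ := (hker _).1 h0
    have h1 : B.ρs e (q m) - B.ρs e (q m') = 0 := by
      rw [← map_sub, ← map_sub, hn, map_smul, map_smul, B.killed]
    exact sub_eq_zero.mp h1
  refine ⟨{ toFun := fun u => B.ρs e (q (Function.surjInv hsurj u)),
            map_add' := ?_, map_smul' := ?_ }, ?_⟩
  · intro u v
    have h1 : P.ρs e (Function.surjInv hsurj (u + v)) =
        P.ρs e (Function.surjInv hsurj u + Function.surjInv hsurj v) := by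
      rw [map_add, Function.surjInv_eq hsurj, Function.surjInv_eq hsurj, Function.surjInv_eq hsurj]
    calc B.ρs e (q (Function.surjInv hsurj (u + v)))
        = B.ρs e (q (Function.surjInv hsurj u + Function.surjInv hsurj v)) :=
          key _ _ h1
      _ = _ := by rw [map_add, map_add]
  · intro c u
    have h1 : P.ρs e (Function.surjInv hsurj (c • u)) =
        P.ρs e (c • Function.surjInv hsurj u) := by
      rw [map_smul, Function.surjInv_eq hsurj, Function.surjInv_eq hsurj]
    calc B.ρs e (q (Function.surjInv hsurj (c • u)))
        = B.ρs e (q (c • Function.surjInv hsurj u)) := key _ _ h1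
      _ = _ := by rw [map_smul, map_smul]; rfl
  · intro m
    exact key _ _ (Function.surjInv_eq hsurj _)

/-- The key extension step: given a partial lift `l` that is compatible over
an open set `I` containing the sources of the edges into `x`, there is a lift
at the vertex `x` compatible with `l` along these edges. -/
lemma crux_step {P A B C : GSheaf G σ}
    (f : GSheafHom A B) (g : GSheafHom B C) (h : GSheafHom P C)
    (hses : SheafSES f g) (hAflab : IsFlabbySheaf A)
    (hgen : ∀ (x : G.Vertex) (m : P.Mv x), ∃ s ∈ sheafSec P Set.univ, s x = m)
    (hedge : ∀ e : G.Edge, Function.Surjective (P.ρs e) ∧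
      ∀ m : P.Mv (G.src e), P.ρs e m = 0 ↔ ∃ n, m = σ (G.label e) • n)
    (x : G.Vertex) (hproj : Module.Projective S (P.Mv x))
    (l : ∀ y, P.Mv y →ₗ[S] B.Mv y)
    (I : Set G.Vertex) (hI : IsOpenSub G I)
    (hsrc : ∀ e, G.tgt e = x → G.src e ∈ I)
    (H2 : ∀ y ∈ I, ∀ m, g.fv y (l y m) = h.fv y m)
    (H3 : ∀ e, G.tgt e ∈ I → ∀ (m : P.Mv (G.tgt e)) (m' : P.Mv (G.src e)),
      P.ρs e m' = P.ρt e m → B.ρs e (l (G.src e) m') = B.ρt e (l (G.tgt e) m)) :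
    ∃ lx : P.Mv x →ₗ[S] B.Mv x,
      (∀ m, g.fv x (lx m) = h.fv x m) ∧
      ∀ e (he : G.tgt e = x) (m : P.Mv (G.tgt e)) (m' : P.Mv (G.src e)),
        P.ρs e m' = P.ρt e m →
        B.ρs e (l (G.src e) m') =
          B.ρt e (mcastV B he.symm (lx (mcastV P he m))) := by
  classical
  choose ψ hψ using fun e => exists_psi (B := B) e (hedge e).1 (hedge e).2 (l (G.src e))
  set Φ : B.Mv x →ₗ[S] (↥(C.Mv x) × ∀ e : G.Edge, B.Me e) :=
    LinearMap.prod (g.fv x).hom (LinearMap.pi fun e =>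
      if he : G.tgt e = x then
        ((B.ρt e).hom : B.Mv (G.tgt e) →ₗ[S] B.Me e) ∘ₗ (mcastV B he.symm).toLinearMap
      else 0) with hΦ
  set θ : P.Mv x →ₗ[S] (↥(C.Mv x) × ∀ e : G.Edge, B.Me e) :=
    LinearMap.prod (h.fv x).hom (LinearMap.pi fun e =>
      if he : G.tgt e = x then
        ψ e ∘ₗ ((P.ρt e).hom : P.Mv (G.tgt e) →ₗ[S] P.Me e) ∘ₗ (mcastV P he.symm).toLinearMap
      else 0) with hθ
  have hmem : ∀ m : P.Mv x, θ m ∈ LinearMap.range Φ := by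
    intro m
    obtain ⟨s, hs, hsx⟩ := hgen x m
    have hu : (fun y => h.fv y (s y)) ∈ sheafSec C Set.univ := by
      refine ⟨fun y hy => absurd (Set.mem_univ y) hy, fun e _ _ => ?_⟩
      rw [← h.comm_s, ← h.comm_t, hs.2 e (Set.mem_univ _) (Set.mem_univ _)]
    obtain ⟨t, ht, htu⟩ :=
      (hses Set.univ (fun _ _ _ _ => Set.mem_univ _)).2.2.2 _ hu
    set d : ∀ y, B.Mv y := fun y => if y ∈ I then t y - l y (s y) else 0 with hd
    have hdI : d ∈ sheafSec B I := by
      refine ⟨fun y hy => if_neg hy, fun e hsI htI => ?_⟩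
      have e1 : d (G.src e) = t (G.src e) - l (G.src e) (s (G.src e)) := if_pos hsI
      have e2 : d (G.tgt e) = t (G.tgt e) - l (G.tgt e) (s (G.tgt e)) := if_pos htI
      rw [e1, e2, map_sub, map_sub, ht.2 e (Set.mem_univ _) (Set.mem_univ _),
        H3 e htI (s (G.tgt e)) (s (G.src e)) (hs.2 e (Set.mem_univ _) (Set.mem_univ _))]
    have hgd : (fun y => g.fv y (d y)) = (0 : ∀ y, C.Mv y) := by
      funext y
      by_cases hy : y ∈ I
      · have e1 : d y = t y - l y (s y) := if_pos hy
        have e2 : g.fv y (t y) = h.fv y (s y) := congrFun htu y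
        show g.fv y (d y) = 0
        rw [e1, map_sub, e2, H2 y hy (s y), sub_self]
      · have e0 : d y = 0 := if_neg hy
        show g.fv y (d y) = 0
        rw [e0, map_zero]
    obtain ⟨a, ha, hfa⟩ := (hses I hI).2.2.1 d hdI hgd
    obtain ⟨a', ha', haa⟩ := hAflab I hI a ha
    refine ⟨t x - f.fv x (a' x), ?_⟩
    have hb1 : g.fv x (t x - f.fv x (a' x)) = h.fv x m := by
      have e1 : g.fv x (t x) = h.fv x (s x) := congrFun htu x
      have e2 : (fun y => g.fv y (f.fv y (a' y))) = (0 : ∀ y, C.Mv y) :=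
        (hses Set.univ (fun _ _ _ _ => Set.mem_univ _)).2.1 a' ha'
      have e3 : g.fv x (f.fv x (a' x)) = 0 := congrFun e2 x
      rw [map_sub, e1, e3, hsx, sub_zero]
    have hb2 : ∀ e (he : G.tgt e = x),
        B.ρt e (mcastV B he.symm (t x - f.fv x (a' x))) =
          ψ e (P.ρt e (mcastV P he.symm m)) := by
      intro e he
      subst he
      have hsI : G.src e ∈ I := hsrc e rfl
      have h1 : B.ρs e (f.fv (G.src e) (a' (G.src e))) =
          B.ρt e (f.fv (G.tgt e) (a' (G.tgt e))) := by
        rw [← f.comm_s, ← f.comm_t, ha'.2 e (Set.mem_univ _) (Set.mem_univ _)]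
      have h2 : B.ρs e (t (G.src e)) = B.ρt e (t (G.tgt e)) :=
        ht.2 e (Set.mem_univ _) (Set.mem_univ _)
      have h3 : f.fv (G.src e) (a' (G.src e)) = d (G.src e) := by
        rw [haa _ hsI]; exact congrFun hfa (G.src e)
      have h4 : d (G.src e) = t (G.src e) - l (G.src e) (s (G.src e)) := if_pos hsI
      have h5 : ψ e (P.ρt e m) = B.ρs e (l (G.src e) (s (G.src e))) := by
        rw [← hsx, ← hs.2 e (Set.mem_univ _) (Set.mem_univ _), hψ]
      show B.ρt e (t (G.tgt e) - f.fv (G.tgt e) (a' (G.tgt e))) = ψ e (P.ρt e m)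
      calc B.ρt e (t (G.tgt e) - f.fv (G.tgt e) (a' (G.tgt e)))
          = B.ρt e (t (G.tgt e)) - B.ρt e (f.fv (G.tgt e) (a' (G.tgt e))) :=
            map_sub _ _ _
        _ = B.ρs e (t (G.src e)) - B.ρs e (f.fv (G.src e) (a' (G.src e))) := by
            rw [h1, h2]
        _ = B.ρs e (t (G.src e)) -
              (B.ρs e (t (G.src e)) - B.ρs e (l (G.src e) (s (G.src e)))) := by
            rw [h3, h4, map_sub]
        _ = B.ρs e (l (G.src e) (s (G.src e))) := by abel
        _ = ψ e (P.ρt e m) := h5.symm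
    show Φ (t x - f.fv x (a' x)) = θ m
    rw [hΦ, hθ]
    simp only [LinearMap.prod_apply, Function.prod, Prod.mk.injEq]
    refine ⟨hb1, funext fun e => ?_⟩
    simp only [LinearMap.pi_apply]
    by_cases he : G.tgt e = x
    · rw [dif_pos he, dif_pos he]
      exact hb2 e he
    · rw [dif_neg he, dif_neg he]
      rfl
  obtain ⟨lx, hlx⟩ := Module.projective_lifting_property (LinearMap.rangeRestrict Φ)
    (LinearMap.codRestrict (LinearMap.range Φ) θ hmem)
    (LinearMap.surjective_rangeRestrict Φ)
  have hΦθ : ∀ m, (∀ mm, g.fv x (lx mm) = h.fv x mm) ∧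
      ((LinearMap.pi fun e => if he : G.tgt e = x then
          ((B.ρt e).hom : B.Mv (G.tgt e) →ₗ[S] B.Me e) ∘ₗ (mcastV B he.symm).toLinearMap
        else 0) (lx m)
        = (LinearMap.pi fun e => if he : G.tgt e = x then
          ψ e ∘ₗ ((P.ρt e).hom : P.Mv (G.tgt e) →ₗ[S] P.Me e) ∘ₗ (mcastV P he.symm).toLinearMap
        else 0) m) := by
    intro m
    have key : ∀ mm, Φ (lx mm) = θ mm := by
      intro mm
      exact congrArg Subtype.val (LinearMap.congr_fun hlx mm)
    constructor
    · intro mm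
      have h1 := key mm
      rw [hΦ, hθ] at h1
      simp only [LinearMap.prod_apply, Function.prod, Prod.mk.injEq] at h1
      exact h1.1
    · have h1 := key m
      rw [hΦ, hθ] at h1
      simp only [LinearMap.prod_apply, Function.prod, Prod.mk.injEq] at h1
      exact h1.2
  refine ⟨lx, (hΦθ 0).1, ?_⟩
  intro e he m m' hm
  subst he
  have h1 := congrFun ((hΦθ (mcastV P rfl m)).2) e
  simp only [LinearMap.pi_apply, dif_pos, LinearMap.comp_apply,
    LinearEquiv.coe_coe, mcastV_self] at h1
  -- h1 : B.ρt e (lx m) = ψ e (P.ρt e m)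
  simp only [mcastV_self]
  rw [h1, ← hm]
  exact (hψ e m').symm

end LocalCriterionAux

/-- Let `G` be a GKM moment graph and `P ∈ C^{ref}` a sheaf such
that (1) each stalk `P^x` is a projective (free) `S`-module and (2) for every
edge `E : y →α x` the map `ρ_{y,E}` induces an isomorphism
`P^y/αP^y ≅ P^E`.  Then `P` is a projective object of the exact category
`C^{ref}`. -/
theorem local_criterion_projective
    {k V S : Type} [Field k] [AddCommGroup V] [Module k V]
    [CommRing S] [IsDomain S] [Algebra k S] (ι : V →ₗ[k] S)
    (hS : IsSymmAlg k V S ι)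
    (G : MomentGraph k V) (hGKM : IsGKM ι G)
    (P : GSheaf G (fun v => ι v)) (hP : IsCref P)
    (hfree : ∀ x, Module.Free S (P.Mv x))
    (hedge : ∀ e : G.Edge, Function.Surjective (P.ρs e) ∧
      ∀ m : P.Mv (G.src e),
        P.ρs e m = 0 ↔ ∃ n : P.Mv (G.src e), m = ι (G.label e) • n) :
    IsProjCref P := by
  classical
  intro B C hB hC g hex h
  obtain ⟨A, hA, f, hses⟩ := hex
  set supp : Set G.Vertex := {x | ∃ m : P.Mv x, m ≠ 0} with hsuppdef
  have hsuppfin : supp.Finite := hP.1.1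
  have hzero : ∀ y ∉ supp, ∀ m : P.Mv y, m = 0 := by
    intro y hy m
    by_contra hm
    exact hy ⟨m, hm⟩
  have hker0 : ∀ (e : G.Edge) (q : P.Mv (G.src e) →ₗ[S] B.Mv (G.src e))
      (m' : P.Mv (G.src e)), P.ρs e m' = 0 → B.ρs e (q m') = 0 := by
    intro e q m' h0
    obtain ⟨n, rfl⟩ := ((hedge e).2 m').1 h0
    rw [map_smul, map_smul, B.killed]
  -- existence of a maximal element of a finite nonempty set
  have hmaxF : ∀ (F : Finset G.Vertex), F.Nonempty →
      ∃ x ∈ F, ∀ z ∈ F, G.le x z → z = x := by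
    intro F
    induction F using Finset.induction_on with
    | empty => intro hne; exact absurd rfl hne.ne_empty
    | @insert a F ha ih =>
      intro _
      by_cases hF : F.Nonempty
      · obtain ⟨x, hxF, hx⟩ := ih hF
        by_cases hxa : G.le x a
        · refine ⟨a, Finset.mem_insert_self _ _, ?_⟩
          intro z hz haz
          rcases Finset.mem_insert.mp hz with rfl | hzF
          · rfl
          · have hzx : z = x := hx z hzF (G.le_trans _ _ _ hxa haz)
            exact G.le_antisymm z a (hzx ▸ hxa) haz
        · refine ⟨x, Finset.mem_insert_of_mem hxF, ?_⟩
          intro z hz hxz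
          rcases Finset.mem_insert.mp hz with rfl | hzF
          · exact absurd hxz hxa
          · exact hx z hzF hxz
      · have hFe : F = ∅ := Finset.not_nonempty_iff_eq_empty.mp hF
        refine ⟨a, Finset.mem_insert_self _ _, ?_⟩
        intro z hz _
        rcases Finset.mem_insert.mp hz with rfl | hzF
        · rfl
        · rw [hFe] at hzF; exact absurd hzF (Finset.notMem_empty z)
  have hmax : ∀ D : Set G.Vertex, D.Finite → D.Nonempty →
      ∃ x ∈ D, ∀ z ∈ D, G.le x z → z = x := by
    intro D hfin hne
    obtain ⟨x, hxF, hx⟩ := hmaxF hfin.toFinset (by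
      rwa [Set.Finite.toFinset_nonempty])
    refine ⟨x, (Set.Finite.mem_toFinset hfin).mp hxF, ?_⟩
    intro z hz hxz
    exact hx z ((Set.Finite.mem_toFinset hfin).mpr hz) hxz
  -- main induction
  have main : ∀ n (D : Set G.Vertex), D ⊆ supp →
      (∀ y ∈ supp, ∀ z ∈ D, G.le y z → y ∈ D) → D.ncard = n →
      ∃ l : ∀ y, P.Mv y →ₗ[S] B.Mv y,
        (∀ y, (y ∈ D ∨ y ∉ supp) → ∀ m, g.fv y (l y m) = h.fv y m) ∧
        (∀ e, (G.tgt e ∈ D ∨ G.tgt e ∉ supp) →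
          ∀ (m : P.Mv (G.tgt e)) (m' : P.Mv (G.src e)),
          P.ρs e m' = P.ρt e m →
          B.ρs e (l (G.src e) m') = B.ρt e (l (G.tgt e) m)) := by
    intro n
    induction n with
    | zero =>
      intro D hDs hDc hcard
      have hDfin : D.Finite := hsuppfin.subset hDs
      have hDe : D = ∅ := (Set.ncard_eq_zero hDfin).1 hcard
      subst hDe
      refine ⟨fun y => 0, ?_, ?_⟩
      · intro y hy m
        rcases hy with hy | hy
        · exact absurd hy (Set.notMem_empty y)
        · rw [hzero y hy m]
          simp
      · intro e he m m' hm
        simp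
    | succ n ih =>
      intro D hDs hDc hcard
      have hDfin : D.Finite := hsuppfin.subset hDs
      have hDne : D.Nonempty := by
        rw [Set.nonempty_iff_ne_empty]
        intro hD
        rw [hD, Set.ncard_empty] at hcard
        exact Nat.succ_ne_zero n hcard.symm
      obtain ⟨x, hxD, hxmax⟩ := hmax D hDfin hDne
      set D' : Set G.Vertex := D \ {x} with hD'def
      have hD's : D' ⊆ supp := fun y hy => hDs hy.1
      have hD'c : ∀ y ∈ supp, ∀ z ∈ D', G.le y z → y ∈ D' := by
        intro y hys z hz hyz
        refine ⟨hDc y hys z hz.1 hyz, ?_⟩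
        intro hyx
        rw [Set.mem_singleton_iff] at hyx
        subst hyx
        exact hz.2 (Set.mem_singleton_iff.mpr (hxmax z hz.1 hyz))
      have hcard' : D'.ncard = n := by
        rw [hD'def, Set.ncard_diff_singleton_of_mem hxD, hcard]
        rfl
      obtain ⟨l, hl1, hl2⟩ := ih D' hD's hD'c hcard'
      set I : Set G.Vertex := {y | ∀ z ∈ supp, G.le z y → z ∈ D'} with hIdef
      have hIopen : IsOpenSub G I :=
        fun y₁ y₂ h12 hy₂ z hz hzle => hy₂ z hz (G.le_trans _ _ _ hzle h12)
      have hIdone : ∀ y ∈ I, y ∈ D' ∨ y ∉ supp := by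
        intro y hy
        by_cases hys : y ∈ supp
        · exact Or.inl (hy y hys (G.le_refl y))
        · exact Or.inr hys
      have hsrcI : ∀ e, G.tgt e = x → G.src e ∈ I := by
        intro e he z hzs hzle
        have hzx : G.le z x := by
          rw [← he]
          exact G.le_trans _ _ _ hzle (G.src_le_tgt e)
        refine ⟨hDc z hzs x hxD hzx, ?_⟩
        intro hzeq
        rw [Set.mem_singleton_iff] at hzeq
        subst hzeq
        have h1 : G.src e = z := G.le_antisymm _ _ (he ▸ G.src_le_tgt e) hzle
        exact G.src_ne_tgt e (h1.trans he.symm)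
      have hproj : Module.Projective S (P.Mv x) := by
        haveI := hfree x
        infer_instance
      obtain ⟨lx, hlx1, hlx2⟩ := crux_step f g h hses hA.2.2.1 hP.2.1.1 hedge x hproj l
        I hIopen hsrcI
        (fun y hy m => hl1 y (hIdone y hy) m)
        (fun e he m m' hm => hl2 e (hIdone _ he) m m' hm)
      refine ⟨Function.update l x lx, ?_, ?_⟩
      · intro y hy m
        by_cases hyx : y = x
        · subst hyx
          rw [Function.update_self]
          exact hlx1 m
        · rw [Function.update_of_ne hyx]
          apply hl1
          rcases hy with hy | hy
          · exact Or.inl ⟨hy, fun hc => hyx (Set.mem_singleton_iff.mp hc)⟩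
          · exact Or.inr hy
      · intro e he m m' hm
        by_cases hte : G.tgt e = x
        · have hse : G.src e ≠ x := fun hsx => G.src_ne_tgt e (hsx.trans hte.symm)
          subst hte
          rw [Function.update_of_ne hse, Function.update_self]
          have h2 := hlx2 e rfl m m' hm
          simpa using h2
        · rcases he with he | he
          · have hse : G.src e ≠ x := fun hsx => hte (hxmax _ he (hsx ▸ G.src_le_tgt e))
            rw [Function.update_of_ne hse, Function.update_of_ne hte]
            exact hl2 e (Or.inl ⟨he, fun hc => hte (Set.mem_singleton_iff.mp hc)⟩) m m' hm
          · have hm0 : m = 0 := hzero _ he m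
            subst hm0
            rw [map_zero, map_zero]
            exact hker0 e _ m' (by rw [hm, map_zero])
  obtain ⟨l, hl1, hl2⟩ := main supp.ncard supp (subset_refl _)
    (fun y hy z _ _ => hy) rfl
  have hallv : ∀ y : G.Vertex, y ∈ supp ∨ y ∉ supp := fun y => Classical.em _
  choose ψ hψ using fun e =>
    exists_psi (σ := fun v => ι v) (B := B) e (hedge e).1 (hedge e).2 (l (G.src e))
  have hcommt : ∀ e (m : P.Mv (G.tgt e)), ψ e (P.ρt e m) = B.ρt e (l (G.tgt e) m) := by
    intro e m
    obtain ⟨m', hm'⟩ := (hedge e).1 (P.ρt e m)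
    rw [← hm', hψ]
    exact hl2 e (hallv _) m m' hm'
  refine ⟨⟨fun y => ModuleCat.ofHom (l y), fun e => ModuleCat.ofHom (ψ e), fun e m => hψ e m, fun e m => hcommt e m⟩, ?_, ?_⟩
  · intro y m
    exact hl1 y (hallv y) m
  · intro e u
    obtain ⟨m, rfl⟩ := (hedge e).1 u
    show g.fe e (ψ e (P.ρs e m)) = h.fe e (P.ρs e m)
    rw [hψ, g.comm_s, hl1 _ (hallv _) m, h.comm_s]
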